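/- For any μ ∈ ℝ^m and any S ⊆ U, the quantity lb(μ, S) = min{ z^RLR(μ, S), ub(S) } is a valid lower bound on z^IP, and ub(S) is a valid upper bound on z^IP. -/

import Mathlib

open Matrix

/-- lb(μ,S) = min{z^RLR(μ,S), ub(S)} is a valid lower bound on z^IP, and ub(S) a valid
upper bound. -/
theorem stmt_8 {n1 n2 m : ℕ} (U : Set (Fin n1 → ℝ))
    (hUbin : ∀ u ∈ U, ∀ k, u k = 0 ∨ u k = 1) (hUfin : U.Finite)
    (Y : (Fin n1 → ℝ) → Set (Fin n2 → ℝ))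
    (c1 : Fin n1 → ℝ) (c2 : Fin n2 → ℝ)
    (A1 : Matrix (Fin m) (Fin n1) ℝ) (A2 : Matrix (Fin m) (Fin n2) ℝ) (b : Fin m → ℝ)
    (z : (Fin n1 → ℝ) → EReal)
    (hz : ∀ u, z u = ⨅ y ∈ {y : Fin n2 → ℝ | y ∈ Y u ∧ A1.mulVec u + A2.mulVec y = b},
        ((c1 ⬝ᵥ u + c2 ⬝ᵥ y : ℝ) : EReal))
    (ub : Set (Fin n1 → ℝ) → EReal)
    (hub : ∀ S : Set (Fin n1 → ℝ), ub S = ⨅ u ∈ S, z u)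
    (μ : Fin m → ℝ)
    (zRLR : Set (Fin n1 → ℝ) → EReal)
    (hzRLR : ∀ S : Set (Fin n1 → ℝ),
      zRLR S = ((μ ⬝ᵥ b : ℝ) : EReal) + ⨅ p ∈ {p : (Fin n1 → ℝ) × (Fin n2 → ℝ) |
        p.1 ∈ U \ S ∧ p.2 ∈ Y p.1},
        ((c1 ⬝ᵥ p.1 + c2 ⬝ᵥ p.2 - μ ⬝ᵥ (A1.mulVec p.1 + A2.mulVec p.2) : ℝ) : EReal))
    (zIP : EReal)
    (hzIP : zIP = ⨅ p ∈ {p : (Fin n1 → ℝ) × (Fin n2 → ℝ) |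
        p.1 ∈ U ∧ p.2 ∈ Y p.1 ∧ A1.mulVec p.1 + A2.mulVec p.2 = b},
        ((c1 ⬝ᵥ p.1 + c2 ⬝ᵥ p.2 : ℝ) : EReal))
    (hfeas : ∃ u ∈ U, ∃ y ∈ Y u, A1.mulVec u + A2.mulVec y = b)
    (hbdd : zIP ≠ ⊥)
    (S : Set (Fin n1 → ℝ)) (hS : S ⊆ U) :
    min (zRLR S) (ub S) ≤ zIP ∧ zIP ≤ ub S := by
  constructor
  · rw [hzIP]
    refine le_iInf₂ fun p hp => ?_
    obtain ⟨hpU, hpY, hpA⟩ := hp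
    by_cases hpS : p.1 ∈ S
    · refine le_trans (min_le_right _ _) ?_
      rw [hub]
      refine le_trans (iInf₂_le p.1 hpS) ?_
      rw [hz]
      exact iInf₂_le p.2 ⟨hpY, hpA⟩
    · refine le_trans (min_le_left _ _) ?_
      rw [hzRLR]
      have h1 : (⨅ q ∈ {q : (Fin n1 → ℝ) × (Fin n2 → ℝ) |
          q.1 ∈ U \ S ∧ q.2 ∈ Y q.1},
          ((c1 ⬝ᵥ q.1 + c2 ⬝ᵥ q.2 - μ ⬝ᵥ (A1.mulVec q.1 + A2.mulVec q.2) : ℝ) : EReal))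
          ≤ ((c1 ⬝ᵥ p.1 + c2 ⬝ᵥ p.2 - μ ⬝ᵥ (A1.mulVec p.1 + A2.mulVec p.2) : ℝ) : EReal) :=
        iInf₂_le p ⟨⟨hpU, hpS⟩, hpY⟩
      calc ((μ ⬝ᵥ b : ℝ) : EReal) + _ ≤ ((μ ⬝ᵥ b : ℝ) : EReal) +
            ((c1 ⬝ᵥ p.1 + c2 ⬝ᵥ p.2 - μ ⬝ᵥ (A1.mulVec p.1 + A2.mulVec p.2) : ℝ) : EReal) :=
              add_le_add_right h1 _
        _ = ((c1 ⬝ᵥ p.1 + c2 ⬝ᵥ p.2 : ℝ) : EReal) := by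
              rw [hpA, ← EReal.coe_add]; norm_num
  · rw [hzIP, hub]
    refine le_iInf₂ fun u huS => ?_
    rw [hz]
    refine le_iInf₂ fun y hy => ?_
    exact iInf₂_le (u, y) ⟨hS huS, hy.1, hy.2⟩
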